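/- For every v ∈ ℝ, the two-sided series Σ_{k∈ℤ} f_Y(v − (2k+1)a) converges and Σ_{k∈ℤ} f_Y(v − (2k+1)a) = ‖f_X‖₁ / (2a). -/

import Mathlib

open MeasureTheory Real

/-- For every `v ∈ ℝ`, the two-sided series `Σ_{k∈ℤ} f_Y(v − (2k+1)a)` converges and
equals `‖f_X‖₁ / (2a)`. -/
theorem stmt_5 (a : ℝ) (ha : 0 < a)
    (fX : ℝ → ℝ) (hfX_pos : ∀ x, 0 ≤ fX x) (hfX_int : Integrable fX)
    (fε : ℝ → ℝ) (hfε : fε = Set.indicator (Set.Icc (-a) a) fun _ => 1 / (2 * a))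
    (fY : ℝ → ℝ) (hfY : ∀ x, fY x = ∫ u, fX (x - u) * fε u) :
    ∀ v : ℝ, Summable (fun k : ℤ => fY (v - (2 * (k : ℝ) + 1) * a)) ∧
      ∑' k : ℤ, fY (v - (2 * (k : ℝ) + 1) * a) = (∫ u, fX u) / (2 * a) := by
  intro v
  -- Step 1: fY x = (∫ t in Ioc (x - a) (x + a), fX t) * (1 / (2 * a))
  have hfY' : ∀ x : ℝ, fY x = (∫ t in Set.Ioc (x - a) (x + a), fX t) * (1 / (2 * a)) := by
    intro x
    rw [hfY x]
    have h1 : (fun u => fX (x - u) * fε u)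
        = Set.indicator (Set.Icc (-a) a) (fun u => fX (x - u) * (1 / (2 * a))) := by
      funext u
      by_cases hu : u ∈ Set.Icc (-a) a
      · simp [hfε, Set.indicator_of_mem hu]
      · simp [hfε, Set.indicator_of_notMem hu]
    rw [h1, integral_indicator measurableSet_Icc, integral_mul_const]
    congr 1
    rw [integral_Icc_eq_integral_Ioc, ← intervalIntegral.integral_of_le (by linarith : -a ≤ a),
      intervalIntegral.integral_comp_sub_left (fun t => fX t) x, sub_neg_eq_add,
      intervalIntegral.integral_of_le (by linarith : x - a ≤ x + a)]
  -- The intervals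
  set T : ℤ → Set ℝ := fun n => Set.Ioc (v + n • (2 * a)) (v + (n + 1) • (2 * a)) with hT
  have hUnion : ⋃ n : ℤ, T n = Set.univ := iUnion_Ioc_add_zsmul (by linarith : (0:ℝ) < 2 * a) v
  have hSum : HasSum (fun n : ℤ => ∫ t in T n, fX t) (∫ u, fX u) := by
    have := hasSum_integral_iUnion (μ := (volume : Measure ℝ)) (f := fX)
      (fun n : ℤ => measurableSet_Ioc (a := v + n • (2 * a)) (b := v + (n + 1) • (2 * a)))
      (Set.pairwise_disjoint_Ioc_add_zsmul v (2 * a))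
      (by rw [show (⋃ n : ℤ, Set.Ioc (v + n • (2*a)) (v + (n+1) • (2*a))) = Set.univ from hUnion]
          exact hfX_int.integrableOn)
    rwa [show (⋃ n : ℤ, Set.Ioc (v + n • (2*a)) (v + (n+1) • (2*a))) = Set.univ from hUnion,
      setIntegral_univ] at this
  -- reindex by the equiv k ↦ -(k+1)
  have hterm : ∀ k : ℤ, fY (v - (2 * (k : ℝ) + 1) * a)
      = (∫ t in T (-(k + 1)), fX t) * (1 / (2 * a)) := by
    intro k
    rw [hfY']
    have h2 : T (-(k + 1)) = Set.Ioc (v - (2 * (k : ℝ) + 1) * a - a) (v - (2 * (k : ℝ) + 1) * a + a) := by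
      rw [hT]
      congr 1 <;> push_cast [zsmul_eq_mul] <;> ring
    rw [h2]
  have hSum2 : HasSum (fun k : ℤ => ∫ t in T (-(k + 1)), fX t) (∫ u, fX u) := by
    have := (((Equiv.addRight (1 : ℤ)).trans (Equiv.neg ℤ)).hasSum_iff
      (f := fun n : ℤ => ∫ t in T n, fX t) (a := ∫ u, fX u)).2 hSum
    exact this
  have hFinal : HasSum (fun k : ℤ => fY (v - (2 * (k : ℝ) + 1) * a))
      ((∫ u, fX u) * (1 / (2 * a))) := by
    have := hSum2.mul_right (1 / (2 * a))
    simpa only [hterm] using this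
  refine ⟨hFinal.summable, ?_⟩
  rw [hFinal.tsum_eq]
  field_simp
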